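/- Uniqueness up to an additive constant of the minimizer: Let E ⊆ ℝ^d be open and connected, let c : E → ℝ^{d×d} be continuous with c(x) symmetric positive definite for every x ∈ E, let p : E → (0,∞) be continuous, and let ℓ : E → ℝ^d be continuous. Suppose φ₁, φ₂ ∈ C¹(E) satisfy J(φ₁) = J(φ₂) < ∞ and J(φ₁) ≤ J(φ) for every φ ∈ C¹(E). Then there exists a constant k ∈ ℝ such that φ₂(x) = φ₁(x) + k for all x ∈ E; in particular ∇φ₁ = ∇φ₂ on E. -/

import Mathlib

open MeasureTheory

lemma quad_sum_eq {d : ℕ} (M : Matrix (Fin d) (Fin d) ℝ) (w : Fin d → ℝ) :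
    (∑ i, ∑ j, w i * M i j * w j) = dotProduct w (M.mulVec w) := by
  simp [dotProduct, Matrix.mulVec, Finset.mul_sum, mul_assoc]

lemma quad_nonneg {d : ℕ} {M : Matrix (Fin d) (Fin d) ℝ} (hM : M.PosDef) (w : Fin d → ℝ) :
    0 ≤ ∑ i, ∑ j, w i * M i j * w j := by
  rw [quad_sum_eq]
  simpa using hM.posSemidef.dotProduct_mulVec_nonneg w

lemma quad_eq_zero {d : ℕ} {M : Matrix (Fin d) (Fin d) ℝ} (hM : M.PosDef) (w : Fin d → ℝ)
    (h : (∑ i, ∑ j, w i * M i j * w j) = 0) : w = 0 := by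
  by_contra hw
  have := hM.dotProduct_mulVec_pos hw
  rw [quad_sum_eq] at h
  simp only [star_trivial] at this
  rw [h] at this
  exact lt_irrefl 0 this

lemma const_on_ball {d : ℕ} {f : (Fin d → ℝ) → ℝ} {z : Fin d → ℝ} {r : ℝ}
    (hf : ∀ x ∈ Metric.ball z r, DifferentiableAt ℝ f x)
    (hf' : ∀ x ∈ Metric.ball z r, fderiv ℝ f x = 0)
    {x : Fin d → ℝ} (hx : x ∈ Metric.ball z r) {y : Fin d → ℝ} (hy : y ∈ Metric.ball z r) :
    f x = f y := by
  refine Convex.is_const_of_fderivWithin_eq_zero (convex_ball z r)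
    (fun a ha => (hf a ha).differentiableWithinAt) (fun a ha => ?_) hx hy
  rw [fderivWithin_of_isOpen Metric.isOpen_ball ha, hf' a ha]

lemma const_of_fderiv_zero_open_conn {d : ℕ} {E : Set (Fin d → ℝ)} {f : (Fin d → ℝ) → ℝ}
    (hE : IsOpen E) (hconn : IsPreconnected E)
    (hf : ∀ x ∈ E, DifferentiableAt ℝ f x)
    (hf' : ∀ x ∈ E, fderiv ℝ f x = 0)
    {x₀ : Fin d → ℝ} (hx₀ : x₀ ∈ E) : ∀ x ∈ E, f x = f x₀ := by
  -- locally constant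
  have loc : ∀ z ∈ E, ∃ r > 0, Metric.ball z r ⊆ E ∧ ∀ y ∈ Metric.ball z r, f y = f z := by
    intro z hz
    obtain ⟨r, hr, hball⟩ := Metric.isOpen_iff.1 hE z hz
    refine ⟨r, hr, hball, fun y hy => ?_⟩
    exact const_on_ball (fun a ha => hf a (hball ha)) (fun a ha => hf' a (hball ha))
      hy (Metric.mem_ball_self hr)
  set S := {x | x ∈ E ∧ f x = f x₀} with hS
  set T := {x | x ∈ E ∧ f x ≠ f x₀} with hT
  have hSopen : IsOpen S := by
    rw [Metric.isOpen_iff]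
    intro z hz
    obtain ⟨r, hr, hball, hc⟩ := loc z hz.1
    exact ⟨r, hr, fun y hy => ⟨hball hy, (hc y hy).trans hz.2⟩⟩
  have hTopen : IsOpen T := by
    rw [Metric.isOpen_iff]
    intro z hz
    obtain ⟨r, hr, hball, hc⟩ := loc z hz.1
    exact ⟨r, hr, fun y hy => ⟨hball hy, (hc y hy).trans_ne hz.2⟩⟩
  have hsub : E ⊆ S ∪ T := fun z hz => by
    by_cases h : f z = f x₀
    · exact Or.inl ⟨hz, h⟩
    · exact Or.inr ⟨hz, h⟩
  have hdisj : Disjoint S T := by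
    rw [Set.disjoint_iff]
    rintro z ⟨⟨_, h1⟩, ⟨_, h2⟩⟩
    exact h2 h1
  have := hconn.subset_left_of_subset_union hSopen hTopen hdisj hsub ⟨x₀, hx₀, ⟨hx₀, rfl⟩⟩
  exact fun x hx => (this hx).2

lemma eq_zero_of_lintegral_zero {d : ℕ} {E : Set (Fin d → ℝ)} (hE : IsOpen E)
    {g : (Fin d → ℝ) → ℝ} (hg : ContinuousOn g E) (hg0 : ∀ x ∈ E, 0 ≤ g x)
    (hint : (∫⁻ x in E, ENNReal.ofReal (g x)) = 0) : ∀ x ∈ E, g x = 0 := by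
  intro x₀ hx₀
  by_contra hne
  have hpos : 0 < g x₀ := lt_of_le_of_ne (hg0 x₀ hx₀) (Ne.symm hne)
  set U : Set (Fin d → ℝ) := E ∩ g ⁻¹' Set.Ioi (g x₀ / 2) with hU
  have hUopen : IsOpen U := hg.isOpen_inter_preimage hE isOpen_Ioi
  have hx₀U : x₀ ∈ U := ⟨hx₀, by simp; linarith⟩
  have hUpos : 0 < volume U := hUopen.measure_pos volume ⟨x₀, hx₀U⟩
  have h1 : (∫⁻ x in U, ENNReal.ofReal (g x)) ≤ ∫⁻ x in E, ENNReal.ofReal (g x) :=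
    lintegral_mono_set Set.inter_subset_left
  have h2 : ENNReal.ofReal (g x₀ / 2) * volume U ≤ ∫⁻ x in U, ENNReal.ofReal (g x) := by
    rw [← setLIntegral_const U (ENNReal.ofReal (g x₀ / 2))]
    refine setLIntegral_mono' hUopen.measurableSet fun x hx => ?_
    exact ENNReal.ofReal_le_ofReal (le_of_lt hx.2)
  have h3 : (0 : ENNReal) < ENNReal.ofReal (g x₀ / 2) * volume U := by
    apply ENNReal.mul_pos
    · simpa [ENNReal.ofReal_pos] using by linarith
    · exact hUpos.ne'
  rw [hint] at h1
  exact absurd (le_trans h2 h1) (by simpa using h3.ne')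

/-- Uniqueness up to an additive constant of the minimizer of the
robust-growth variational functional `J`. -/
theorem minimizer_unique_up_to_constant (d : ℕ) (E : Set (Fin d → ℝ))
    (hE : IsOpen E) (hEconn : IsConnected E)
    (c : (Fin d → ℝ) → Matrix (Fin d) (Fin d) ℝ)
    (hc_cont : ∀ i j, ContinuousOn (fun y => c y i j) E)
    (hc_pd : ∀ x ∈ E, (c x).PosDef)
    (p : (Fin d → ℝ) → ℝ) (hp_cont : ContinuousOn p E) (hp_pos : ∀ x ∈ E, 0 < p x)
    (ℓ : (Fin d → ℝ) → (Fin d → ℝ)) (hℓ_cont : ContinuousOn ℓ E)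
    (J : ((Fin d → ℝ) → ℝ) → ENNReal)
    (hJ : ∀ φ, J φ = ∫⁻ x in E, ENNReal.ofReal
      ((∑ i, ∑ j, (fderiv ℝ φ x (Pi.single i 1) - ℓ x i) * c x i j *
        (fderiv ℝ φ x (Pi.single j 1) - ℓ x j)) * p x))
    (φ₁ φ₂ : (Fin d → ℝ) → ℝ)
    (h₁ : ContDiffOn ℝ 1 φ₁ E) (h₂ : ContDiffOn ℝ 1 φ₂ E)
    (heq : J φ₁ = J φ₂) (hfin : J φ₁ < ⊤)
    (hmin : ∀ φ : (Fin d → ℝ) → ℝ, ContDiffOn ℝ 1 φ E → J φ₁ ≤ J φ) :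
    (∃ k : ℝ, ∀ x ∈ E, φ₂ x = φ₁ x + k) ∧
    ∀ x ∈ E, fderiv ℝ φ₁ x = fderiv ℝ φ₂ x := by
  obtain ⟨x₀, hx₀⟩ := hEconn.nonempty
  -- differentiability
  have hd₁ : ∀ x ∈ E, DifferentiableAt ℝ φ₁ x := fun x hx =>
    (h₁.differentiableOn one_ne_zero).differentiableAt (hE.mem_nhds hx)
  have hd₂ : ∀ x ∈ E, DifferentiableAt ℝ φ₂ x := fun x hx =>
    (h₂.differentiableOn one_ne_zero).differentiableAt (hE.mem_nhds hx)
  -- midpoint function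
  set φm : (Fin d → ℝ) → ℝ := fun x => (φ₁ x + φ₂ x) / 2 with hφm_def
  have hφm : ContDiffOn ℝ 1 φm E := (h₁.add h₂).div_const 2
  have hfm : ∀ x ∈ E, ∀ i, fderiv ℝ φm x (Pi.single i 1) =
      (fderiv ℝ φ₁ x (Pi.single i 1) + fderiv ℝ φ₂ x (Pi.single i 1)) / 2 := by
    intro x hx i
    have hder : HasFDerivAt φm ((2⁻¹ : ℝ) • (fderiv ℝ φ₁ x + fderiv ℝ φ₂ x)) x := by
      have h := (((hd₁ x hx).hasFDerivAt.add (hd₂ x hx).hasFDerivAt).const_smul (2⁻¹ : ℝ))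
      have hfun : φm = fun y => (2⁻¹ : ℝ) • (φ₁ y + φ₂ y) := by
        funext y; simp [hφm_def, smul_eq_mul]; ring
      rw [hfun]
      exact h
    rw [hder.fderiv]
    simp [ContinuousLinearMap.add_apply, smul_eq_mul]
    ring
  -- integrand functions
  set G : ((Fin d → ℝ) → ℝ) → (Fin d → ℝ) → ℝ := fun φ x =>
    (∑ i, ∑ j, (fderiv ℝ φ x (Pi.single i 1) - ℓ x i) * c x i j *
      (fderiv ℝ φ x (Pi.single j 1) - ℓ x j)) * p x with hG_def
  set Fd : (Fin d → ℝ) → ℝ := fun x =>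
    (∑ i, ∑ j, (fderiv ℝ φ₂ x (Pi.single i 1) - fderiv ℝ φ₁ x (Pi.single i 1)) * c x i j *
      (fderiv ℝ φ₂ x (Pi.single j 1) - fderiv ℝ φ₁ x (Pi.single j 1))) * p x with hFd_def
  have hJG : ∀ φ, J φ = ∫⁻ x in E, ENNReal.ofReal (G φ x) := hJ
  -- sum identity
  have sum_id : ∀ (M : Matrix (Fin d) (Fin d) ℝ) (a b : Fin d → ℝ),
      4 * (∑ i, ∑ j, ((a i + b i) / 2) * M i j * ((a j + b j) / 2)) +
        (∑ i, ∑ j, (b i - a i) * M i j * (b j - a j)) =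
      2 * (∑ i, ∑ j, a i * M i j * a j) + 2 * (∑ i, ∑ j, b i * M i j * b j) := by
    intro M a b
    simp only [Finset.mul_sum, ← Finset.sum_add_distrib]
    refine Finset.sum_congr rfl fun i _ => Finset.sum_congr rfl fun j _ => by ring
  -- pointwise key identity on E
  have key : ∀ x ∈ E, 4 * G φm x + Fd x = 2 * G φ₁ x + 2 * G φ₂ x := by
    intro x hx
    simp only [hG_def, hFd_def]
    have h1 : ∀ i, fderiv ℝ φm x (Pi.single i 1) - ℓ x i =
        (((fderiv ℝ φ₁ x (Pi.single i 1) - ℓ x i)) + ((fderiv ℝ φ₂ x (Pi.single i 1) - ℓ x i))) / 2 := by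
      intro i; rw [hfm x hx i]; ring
    have h2 : ∀ i, fderiv ℝ φ₂ x (Pi.single i 1) - fderiv ℝ φ₁ x (Pi.single i 1) =
        ((fderiv ℝ φ₂ x (Pi.single i 1) - ℓ x i)) - ((fderiv ℝ φ₁ x (Pi.single i 1) - ℓ x i)) := by
      intro i; ring
    simp only [h1, h2]
    have := sum_id (c x) (fun i => fderiv ℝ φ₁ x (Pi.single i 1) - ℓ x i)
      (fun i => fderiv ℝ φ₂ x (Pi.single i 1) - ℓ x i)
    linear_combination (p x) * this
  -- continuity facts
  have hDcont : ∀ (φ : (Fin d → ℝ) → ℝ), ContDiffOn ℝ 1 φ E → ∀ i : Fin d,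
      ContinuousOn (fun x => fderiv ℝ φ x (Pi.single i 1)) E := by
    intro φ hφ i
    exact (hφ.continuousOn_fderiv_of_isOpen hE le_rfl).clm_apply continuousOn_const
  have hℓi : ∀ i : Fin d, ContinuousOn (fun x => ℓ x i) E := fun i =>
    (continuous_apply i).comp_continuousOn hℓ_cont
  have hGcont : ∀ (φ : (Fin d → ℝ) → ℝ), ContDiffOn ℝ 1 φ E → ContinuousOn (G φ) E := by
    intro φ hφ
    refine ContinuousOn.mul ?_ hp_cont
    refine continuousOn_finset_sum _ fun i _ => continuousOn_finset_sum _ fun j _ => ?_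
    exact ((((hDcont φ hφ i).sub (hℓi i)).mul (hc_cont i j)).mul
      ((hDcont φ hφ j).sub (hℓi j)))
  have hFdcont : ContinuousOn Fd E := by
    refine ContinuousOn.mul ?_ hp_cont
    refine continuousOn_finset_sum _ fun i _ => continuousOn_finset_sum _ fun j _ => ?_
    exact ((((hDcont φ₂ h₂ i).sub (hDcont φ₁ h₁ i)).mul (hc_cont i j)).mul
      (((hDcont φ₂ h₂ j).sub (hDcont φ₁ h₁ j))))
  -- nonnegativity
  have hGnn : ∀ (φ : (Fin d → ℝ) → ℝ) (x : Fin d → ℝ), x ∈ E → 0 ≤ G φ x := fun φ x hx =>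
    mul_nonneg (quad_nonneg (hc_pd x hx) (fun i => fderiv ℝ φ x (Pi.single i 1) - ℓ x i))
      (hp_pos x hx).le
  have hFdnn : ∀ x ∈ E, 0 ≤ Fd x := fun x hx =>
    mul_nonneg (quad_nonneg (hc_pd x hx)
      (fun i => fderiv ℝ φ₂ x (Pi.single i 1) - fderiv ℝ φ₁ x (Pi.single i 1))) (hp_pos x hx).le
  -- a.e. measurability
  have haem : ∀ {f : (Fin d → ℝ) → ℝ}, ContinuousOn f E →
      AEMeasurable (fun x => ENNReal.ofReal (f x)) (volume.restrict E) := fun hf =>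
    ENNReal.measurable_ofReal.comp_aemeasurable (hf.aemeasurable hE.measurableSet)
  -- the main integral identity
  set A := ∫⁻ x in E, ENNReal.ofReal (G φm x) with hA_def
  set B := ∫⁻ x in E, ENNReal.ofReal (Fd x) with hB_def
  have hchain : 4 * A + B = 4 * J φ₁ := by
    have e1 : 4 * A = ∫⁻ x in E, ENNReal.ofReal (4 * G φm x) := by
      rw [hA_def, ← lintegral_const_mul' _ _ (by norm_num : (4 : ENNReal) ≠ ⊤)]
      refine lintegral_congr fun x => ?_
      rw [ENNReal.ofReal_mul (by norm_num : (0:ℝ) ≤ 4)]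
      norm_num
    have e2 : (∫⁻ x in E, ENNReal.ofReal (4 * G φm x)) + B
        = ∫⁻ x in E, (ENNReal.ofReal (4 * G φm x) + ENNReal.ofReal (Fd x)) :=
      (lintegral_add_left' (haem (continuousOn_const.mul (hGcont φm hφm))) _).symm
    have e3 : (∫⁻ x in E, (ENNReal.ofReal (4 * G φm x) + ENNReal.ofReal (Fd x)))
        = ∫⁻ x in E, (ENNReal.ofReal (2 * G φ₁ x) + ENNReal.ofReal (2 * G φ₂ x)) := by
      refine setLIntegral_congr_fun hE.measurableSet (fun x hx => ?_)
      rw [← ENNReal.ofReal_add (mul_nonneg (by norm_num) (hGnn φm x hx)) (hFdnn x hx),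
        key x hx,
        ENNReal.ofReal_add (mul_nonneg (by norm_num) (hGnn φ₁ x hx))
          (mul_nonneg (by norm_num) (hGnn φ₂ x hx))]
    have e4 : (∫⁻ x in E, (ENNReal.ofReal (2 * G φ₁ x) + ENNReal.ofReal (2 * G φ₂ x)))
        = 2 * J φ₁ + 2 * J φ₂ := by
      rw [lintegral_add_left' (haem (f := fun x => 2 * G φ₁ x) (continuousOn_const.mul (hGcont φ₁ h₁)))]
      congr 1
      · rw [hJG φ₁, ← lintegral_const_mul' _ _ (by norm_num : (2 : ENNReal) ≠ ⊤)]
        refine lintegral_congr fun x => ?_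
        rw [ENNReal.ofReal_mul (by norm_num : (0:ℝ) ≤ 2)]; norm_num
      · rw [hJG φ₂, ← lintegral_const_mul' _ _ (by norm_num : (2 : ENNReal) ≠ ⊤)]
        refine lintegral_congr fun x => ?_
        rw [ENNReal.ofReal_mul (by norm_num : (0:ℝ) ≤ 2)]; norm_num
    rw [e1, e2, e3, e4, ← heq]
    ring
  have hminA : J φ₁ ≤ A := by rw [hA_def, ← hJG φm]; exact hmin φm hφm
  have h4top : (4 : ENNReal) * J φ₁ ≠ ⊤ := ENNReal.mul_ne_top (by norm_num) hfin.ne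
  have hAeq : 4 * A = 4 * J φ₁ := by
    refine le_antisymm ?_ (mul_le_mul_right hminA 4)
    calc 4 * A ≤ 4 * A + B := le_self_add
    _ = 4 * J φ₁ := hchain
  have hB0 : B = 0 := by
    have : 4 * J φ₁ + B = 4 * J φ₁ + 0 := by
      conv_lhs => rw [← hAeq]
      rw [hchain, add_zero]
    exact (ENNReal.add_right_inj h4top).mp this
  -- hence the integrand Fd vanishes on E
  have hFd0 : ∀ x ∈ E, Fd x = 0 := eq_zero_of_lintegral_zero hE hFdcont hFdnn hB0
  -- gradients agree on E
  have hgrad : ∀ x ∈ E, fderiv ℝ φ₁ x = fderiv ℝ φ₂ x := by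
    intro x hx
    have hsum0 : (∑ i, ∑ j, (fderiv ℝ φ₂ x (Pi.single i 1) - fderiv ℝ φ₁ x (Pi.single i 1))
        * c x i j * (fderiv ℝ φ₂ x (Pi.single j 1) - fderiv ℝ φ₁ x (Pi.single j 1))) = 0 := by
      have h0 := hFd0 x hx
      rw [hFd_def] at h0
      rcases mul_eq_zero.mp h0 with h | h
      · exact h
      · exact absurd h (hp_pos x hx).ne'
    have hw := quad_eq_zero (hc_pd x hx)
      (fun i => fderiv ℝ φ₂ x (Pi.single i 1) - fderiv ℝ φ₁ x (Pi.single i 1)) hsum0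
    have hwi : ∀ i, fderiv ℝ φ₁ x (Pi.single i 1) = fderiv ℝ φ₂ x (Pi.single i 1) := by
      intro i
      have := congrFun hw i
      simp only [Pi.zero_apply, sub_eq_zero] at this
      exact this.symm
    apply ContinuousLinearMap.coe_injective
    refine Module.Basis.ext (Pi.basisFun ℝ (Fin d)) fun i => ?_
    simpa using hwi i
  -- constancy of the difference
  have hψ0 : ∀ x ∈ E, fderiv ℝ (fun y => φ₂ y - φ₁ y) x = 0 := fun x hx => by
    rw [fderiv_fun_sub (hd₂ x hx) (hd₁ x hx), hgrad x hx, sub_self]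
  have hconst := const_of_fderiv_zero_open_conn hE hEconn.isPreconnected
    (fun x hx => (hd₂ x hx).sub (hd₁ x hx)) hψ0 hx₀
  refine ⟨⟨φ₂ x₀ - φ₁ x₀, fun x hx => ?_⟩, hgrad⟩
  have := hconst x hx
  simp only [Pi.sub_apply] at this
  linarith
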